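/- Let n ≥ 3 be an odd integer, let k ≥ 4, and let a_1, …, a_k be nonzero integers. Then the number R(N) of integer solutions of the equation a_1·x_1^n + … + a_{k−1}·x_{k−1}^n + 2·a_k·x_k = 0 in the hypercube [−N, N]^k satisfies R(N) ≪ N^{k−2+ε}. -/

import Mathlib

lemma sum_inv_sq (K : ℕ) : ∑ x ∈ Finset.Icc (1:ℤ) (K:ℤ), (1:ℝ)/(x:ℝ)^2 ≤ 2 - 1/(K:ℝ) := by
  induction K with
  | zero => simp
  | succ K ih =>
    have hins : Finset.Icc (1:ℤ) ((K:ℤ)+1) = insert ((K:ℤ)+1) (Finset.Icc (1:ℤ) (K:ℤ)) := by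
      ext x; simp [Finset.mem_Icc]; omega
    have h1 : ((K:ℤ)+1) ∉ Finset.Icc (1:ℤ) (K:ℤ) := by simp
    push_cast
    rw [hins, Finset.sum_insert h1]
    push_cast
    rcases Nat.eq_zero_or_pos K with hK0 | hKpos
    · subst hK0; simp; norm_num
    · have hK : (1:ℝ) ≤ (K:ℝ) := by exact_mod_cast hKpos
      have key : (1:ℝ)/((K:ℝ)+1)^2 ≤ 1/(K:ℝ) - 1/((K:ℝ)+1) := by
        rw [div_sub_div _ _ (by linarith) (by linarith), div_le_div_iff₀ (by positivity) (by positivity)]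
        nlinarith
      linarith

lemma spacing (n : ℕ) (hn : 1 ≤ n) (m y1 y2 : ℤ) (hm : 1 ≤ m) (h1 : m ≤ y1) (h2 : y1 ≤ y2) :
    (y2 - y1) * m^(n-1) ≤ y2^n - y1^n := by
  rw [← geom_sum₂_mul y2 y1 n]
  rw [mul_comm]
  apply mul_le_mul_of_nonneg_right _ (by omega)
  calc m^(n-1) = ∑ _i ∈ Finset.range 1, m^(n-1) := by simp
    _ ≤ ∑ i ∈ Finset.range n, m^(n-1) := by
        apply Finset.sum_le_sum_of_subset_of_nonneg
        · exact Finset.range_subset_range.mpr hn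
        · intro i _ _; positivity
    _ ≤ ∑ i ∈ Finset.range n, y2^i * y1^(n-1-i) := by
        apply Finset.sum_le_sum
        intro i hi
        have hi' : i ≤ n - 1 := by simp at hi; omega
        calc m^(n-1) = m^i * m^(n-1-i) := by rw [← pow_add]; congr 1; omega
          _ ≤ y2^i * y1^(n-1-i) := by
              have hm0 : (0:ℤ) ≤ m := by omega
              apply mul_le_mul (pow_le_pow_left₀ hm0 (by omega) i)
                (pow_le_pow_left₀ hm0 h1 _) (pow_nonneg hm0 _) (pow_nonneg (by omega) _)

lemma core_count (n : ℕ) (hn : 1 ≤ n) (b m N lo hi M : ℤ) (hb : 1 ≤ |b|) (hm : 1 ≤ m)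
    (hM : 0 ≤ M) (hlh : hi - lo ≤ 2*M) :
    ((((Finset.Icc m N).filter (fun y => b * y^n ∈ Finset.Icc lo hi)).card : ℤ) - 1) * m^(n-1)
      ≤ 2*M := by
  set S := (Finset.Icc m N).filter (fun y => b * y^n ∈ Finset.Icc lo hi) with hS
  by_cases hne : S.Nonempty
  · set y1 := S.min' hne
    set y2 := S.max' hne
    have hy1 : y1 ∈ S := S.min'_mem hne
    have hy2 : y2 ∈ S := S.max'_mem hne
    have h12 : y1 ≤ y2 := S.min'_le _ hy2
    have hmy1 : m ≤ y1 := by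
      have := (Finset.mem_filter.mp hy1).1; exact (Finset.mem_Icc.mp this).1
    have hv1 : b * y1^n ∈ Finset.Icc lo hi := (Finset.mem_filter.mp hy1).2
    have hv2 : b * y2^n ∈ Finset.Icc lo hi := (Finset.mem_filter.mp hy2).2
    have hd0 : 0 ≤ y2^n - y1^n := by
      have := pow_le_pow_left₀ (by omega : (0:ℤ) ≤ y1) h12 n; omega
    have hd : y2^n - y1^n ≤ 2*M := by
      have h1 := Finset.mem_Icc.mp hv1
      have h2 := Finset.mem_Icc.mp hv2
      have habs : |b * (y2^n - y1^n)| ≤ hi - lo := by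
        rw [mul_sub]; rw [abs_le]; constructor <;> omega
      have : y2^n - y1^n ≤ |b| * (y2^n - y1^n) := le_mul_of_one_le_left hd0 hb
      calc y2^n - y1^n ≤ |b| * (y2^n - y1^n) := this
        _ = |b * (y2^n - y1^n)| := by
            rw [abs_mul, abs_of_nonneg hd0]
        _ ≤ hi - lo := habs
        _ ≤ 2*M := hlh
    have hcard : (S.card : ℤ) - 1 ≤ y2 - y1 := by
      have hsub : S ⊆ Finset.Icc y1 y2 := by
        intro x hx
        exact Finset.mem_Icc.mpr ⟨S.min'_le _ hx, S.le_max' _ hx⟩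
      have := Finset.card_le_card hsub
      rw [Int.card_Icc] at this
      have h2 : ((y2 + 1 - y1).toNat : ℤ) = y2 + 1 - y1 := Int.toNat_of_nonneg (by omega)
      have : (S.card : ℤ) ≤ ((y2 + 1 - y1).toNat : ℤ) := by exact_mod_cast this
      omega
    calc ((S.card : ℤ) - 1) * m^(n-1) ≤ (y2 - y1) * m^(n-1) :=
          mul_le_mul_of_nonneg_right hcard (by positivity)
      _ ≤ y2^n - y1^n := spacing n hn m y1 y2 hm hmy1 h12
      _ ≤ 2*M := hd
  · rw [Finset.not_nonempty_iff_eq_empty] at hne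
    rw [hne]
    simp only [Finset.card_empty, Nat.cast_zero]
    have h0 : (0:ℤ) ≤ m^(n-1) := by positivity
    nlinarith [h0, hM]

lemma neg_count (n : ℕ) (ho : Odd n) (b m N lo hi : ℤ) :
    ((Finset.Icc (-N) (-m)).filter (fun y => b * y^n ∈ Finset.Icc lo hi)).card
    = ((Finset.Icc m N).filter (fun y => (-b) * y^n ∈ Finset.Icc lo hi)).card := by
  apply Finset.card_bij' (fun y _ => -y) (fun y _ => -y) ?_ ?_ (fun y _ => by ring) (fun y _ => by ring)
  · intro y hy
    have h1 := Finset.mem_filter.mp hy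
    have h2 := Finset.mem_Icc.mp h1.1
    show -y ∈ _
    rw [Finset.mem_filter]
    refine ⟨Finset.mem_Icc.mpr ⟨by omega, by omega⟩, ?_⟩
    show (-b) * (-y)^n ∈ Finset.Icc lo hi
    rw [ho.neg_pow, show (-b) * -(y^n) = b * y^n from by ring]
    exact h1.2
  · intro y hy
    have h1 := Finset.mem_filter.mp hy
    have h2 := Finset.mem_Icc.mp h1.1
    show -y ∈ _
    rw [Finset.mem_filter]
    refine ⟨Finset.mem_Icc.mpr ⟨by omega, by omega⟩, ?_⟩
    show b * (-y)^n ∈ Finset.Icc lo hi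
    rw [ho.neg_pow, show b * -(y^n) = (-b) * y^n from by ring]
    exact h1.2

lemma slice_count (n : ℕ) (hn : 3 ≤ n) (ho : Odd n) (a b t M N x : ℤ) (hb : 1 ≤ |b|)
    (hM : 0 ≤ M) (hx : 1 ≤ |x|) :
    ((((Finset.Icc (-N) N).filter
        (fun y => |a * x^n + b * y^n + t| ≤ M ∧ |x| ≤ |y|)).card : ℝ)
      ≤ 4*(M:ℝ)/(x:ℝ)^2 + 2) := by
  set lo := -t - a*x^n - M with hlo
  set hi := -t - a*x^n + M with hhi
  set Y := (Finset.Icc (-N) N).filter (fun y => |a * x^n + b * y^n + t| ≤ M ∧ |x| ≤ |y|) with hY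
  have hsub : Y ⊆ ((Finset.Icc |x| N).filter (fun y => b * y^n ∈ Finset.Icc lo hi))
      ∪ ((Finset.Icc (-N) (-|x|)).filter (fun y => b * y^n ∈ Finset.Icc lo hi)) := by
    intro y hy
    rw [Finset.mem_filter, Finset.mem_Icc] at hy
    obtain ⟨⟨hy1, hy2⟩, hcond, hxy⟩ := hy
    have hcond' := abs_le.mp hcond
    have hmem : b * y^n ∈ Finset.Icc lo hi := by
      rw [Finset.mem_Icc, hlo, hhi]
      constructor <;> linarith [hcond'.1, hcond'.2]
    rw [Finset.mem_union, Finset.mem_filter, Finset.mem_filter]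
    rcases le_or_gt 0 y with h0 | h0
    · left; rw [abs_of_nonneg h0] at hxy; exact ⟨Finset.mem_Icc.mpr ⟨hxy, hy2⟩, hmem⟩
    · right; rw [abs_of_neg h0] at hxy
      exact ⟨Finset.mem_Icc.mpr ⟨hy1, by omega⟩, hmem⟩
  have hcards := (Finset.card_le_card hsub).trans (Finset.card_union_le _ _)
  set c1 := ((Finset.Icc |x| N).filter (fun y => b * y^n ∈ Finset.Icc lo hi)).card with hc1
  set c2 := ((Finset.Icc (-N) (-|x|)).filter (fun y => b * y^n ∈ Finset.Icc lo hi)).card with hc2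
  have hb1 : ((c1:ℤ) - 1) * |x|^(n-1) ≤ 2*M :=
    core_count n (by omega) b |x| N lo hi M hb hx hM (by omega)
  have hb2 : ((c2:ℤ) - 1) * |x|^(n-1) ≤ 2*M := by
    rw [hc2, neg_count n ho b |x| N lo hi]
    exact core_count n (by omega) (-b) |x| N lo hi M (by rwa [abs_neg]) hx hM (by omega)
  have hxne : (x:ℝ) ≠ 0 := by
    intro h; rw [show x = 0 from by exact_mod_cast h] at hx; simp at hx
  have hx2 : (0:ℝ) < (x:ℝ)^2 := by positivity
  have step : ∀ c : ℕ, ((c:ℤ) - 1) * |x|^(n-1) ≤ 2*M → ((c:ℝ) ≤ 2*(M:ℝ)/(x:ℝ)^2 + 1) := by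
    intro c hc
    have hZ : ((c:ℤ) - 1) * x^2 ≤ 2*M := by
      rcases Nat.eq_zero_or_pos c with h0 | h1
      · subst h0; simp; nlinarith [sq_nonneg x, hM]
      · have hmono : x^2 ≤ |x|^(n-1) := by
          rw [← sq_abs]
          exact pow_le_pow_right₀ hx (by omega)
        calc ((c:ℤ)-1)*x^2 ≤ ((c:ℤ)-1)*|x|^(n-1) := by
              apply mul_le_mul_of_nonneg_left hmono
              have : (1:ℤ) ≤ (c:ℤ) := by exact_mod_cast h1
              omega
          _ ≤ 2*M := hc
    rw [← sub_le_iff_le_add, le_div_iff₀ hx2]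
    have : (((c:ℤ) - 1) * x^2 : ℝ) ≤ ((2*M : ℤ) : ℝ) := by exact_mod_cast hZ
    push_cast at this
    linarith
  have hYc : (Y.card : ℝ) ≤ (c1:ℝ) + (c2:ℝ) := by exact_mod_cast hcards
  have := step c1 hb1
  have := step c2 hb2
  calc (Y.card : ℝ) ≤ (c1:ℝ) + (c2:ℝ) := hYc
    _ ≤ (2*(M:ℝ)/(x:ℝ)^2 + 1) + (2*(M:ℝ)/(x:ℝ)^2 + 1) := by
        apply add_le_add (step c1 hb1) (step c2 hb2)
    _ = 4*(M:ℝ)/(x:ℝ)^2 + 2 := by ring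

lemma half_pair (n : ℕ) (hn : 3 ≤ n) (ho : Odd n) (a b t M N : ℤ) (hb : 1 ≤ |b|)
    (hM : 0 ≤ M) (hN : 1 ≤ N) :
    ((((Finset.Icc (-N) N ×ˢ Finset.Icc (-N) N).filter
       (fun p : ℤ×ℤ => |a*p.1^n + b*p.2^n + t| ≤ M ∧ |p.1| ≤ |p.2|)).card : ℝ)
     ≤ 6*(N:ℝ) + 16*(M:ℝ) + 1) := by
  set H := (Finset.Icc (-N) N ×ˢ Finset.Icc (-N) N).filter
       (fun p : ℤ×ℤ => |a*p.1^n + b*p.2^n + t| ≤ M ∧ |p.1| ≤ |p.2|) with hH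
  have hfib : H.card = ∑ x ∈ Finset.Icc (-N) N, (H.filter (fun p => p.1 = x)).card := by
    apply Finset.card_eq_sum_card_fiberwise
    intro p hp
    simp only [Finset.mem_coe, hH, Finset.mem_filter, Finset.mem_product] at hp
    exact hp.1.1
  set F : ℤ → ℝ := fun x => (((Finset.Icc (-N) N).filter
        (fun y => |a * x^n + b * y^n + t| ≤ M ∧ |x| ≤ |y|)).card : ℝ) with hF
  have hslice : ∀ x : ℤ, ((H.filter (fun p => p.1 = x)).card : ℝ) ≤ F x := by
    intro x
    rw [hF]
    beta_reduce
    have : (H.filter (fun p => p.1 = x)).card ≤ ((Finset.Icc (-N) N).filter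
        (fun y => |a * x^n + b * y^n + t| ≤ M ∧ |x| ≤ |y|)).card := by
      apply Finset.card_le_card_of_injOn Prod.snd
      · intro p hp
        rw [Finset.mem_coe, Finset.mem_filter] at hp
        obtain ⟨hp1, hp2⟩ := hp
        rw [hH, Finset.mem_filter, Finset.mem_product] at hp1
        rw [Finset.mem_coe, Finset.mem_filter]
        subst hp2
        exact ⟨hp1.1.2, hp1.2⟩
      · intro p hp q hq hpq
        simp only [Finset.coe_filter, Set.mem_setOf_eq] at hp hq
        exact Prod.ext (hp.2.trans hq.2.symm) hpq
    exact_mod_cast this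
  -- split index set
  have hdisj1 : Disjoint (Finset.Icc (-N) (-1)) (Finset.Icc (0:ℤ) 0 ∪ Finset.Icc 1 N) := by
    rw [Finset.disjoint_left]
    intro x hx hx'
    rw [Finset.mem_Icc] at hx
    rw [Finset.mem_union, Finset.mem_Icc, Finset.mem_Icc] at hx'
    omega
  have hdisj2 : Disjoint (Finset.Icc (0:ℤ) 0) (Finset.Icc 1 N) := by
    rw [Finset.disjoint_left]
    intro x hx hx'
    rw [Finset.mem_Icc] at hx
    rw [Finset.mem_Icc] at hx'
    omega
  have hsplit : Finset.Icc (-N) N = Finset.Icc (-N) (-1) ∪ (Finset.Icc 0 0 ∪ Finset.Icc 1 N) := by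
    ext x
    rw [Finset.mem_union, Finset.mem_union, Finset.mem_Icc, Finset.mem_Icc, Finset.mem_Icc,
      Finset.mem_Icc]
    omega
  have hFsum : (H.card : ℝ) = ∑ x ∈ Finset.Icc (-N) N, ((H.filter (fun p => p.1 = x)).card : ℝ) := by
    rw [hfib]; push_cast; ring
  have hbig : (H.card : ℝ) ≤ ∑ x ∈ Finset.Icc (-N) N, F x := by
    rw [hFsum]
    exact Finset.sum_le_sum (fun x _ => hslice x)
  rw [hsplit, Finset.sum_union hdisj1, Finset.sum_union hdisj2] at hbig
  -- bound the three pieces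
  have hzero : ∑ x ∈ Finset.Icc (0:ℤ) 0, F x ≤ 2*(N:ℝ) + 1 := by
    rw [Finset.Icc_self, Finset.sum_singleton, hF]
    beta_reduce
    have hsub := Finset.filter_subset
      (fun y => |a * (0:ℤ)^n + b * y^n + t| ≤ M ∧ |(0:ℤ)| ≤ |y|) (Finset.Icc (-N) N)
    have hcard := Finset.card_le_card hsub
    rw [Int.card_Icc] at hcard
    have h1 : ((N + 1 - -N).toNat : ℝ) = 2*(N:ℝ) + 1 := by
      have : ((N + 1 - -N).toNat : ℤ) = N + 1 - -N := Int.toNat_of_nonneg (by omega)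
      have h2 : ((N + 1 - -N).toNat : ℝ) = ((N + 1 - -N : ℤ) : ℝ) := by exact_mod_cast this
      rw [h2]; push_cast; ring
    calc (((Finset.Icc (-N) N).filter _).card : ℝ) ≤ ((N + 1 - -N).toNat : ℝ) := by
          exact_mod_cast hcard
      _ = 2*(N:ℝ) + 1 := h1
  have hNN : ((N.toNat : ℤ)) = N := Int.toNat_of_nonneg (by omega)
  have hcommon : ∑ x ∈ Finset.Icc (1:ℤ) N, (4*(M:ℝ)/(x:ℝ)^2 + 2) ≤ 8*(M:ℝ) + 2*(N:ℝ) := by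
    have h3 : ∑ x ∈ Finset.Icc (1:ℤ) N, (4*(M:ℝ)/(x:ℝ)^2 + 2)
        = 4*(M:ℝ) * (∑ x ∈ Finset.Icc (1:ℤ) N, (1:ℝ)/(x:ℝ)^2) + 2 * ((Finset.Icc (1:ℤ) N).card : ℝ) := by
      rw [Finset.sum_add_distrib, Finset.mul_sum, Finset.sum_const]
      simp only [nsmul_eq_mul]
      congr 1
      · apply Finset.sum_congr rfl; intro x _; ring
      · ring
    have h4 : ∑ x ∈ Finset.Icc (1:ℤ) N, (1:ℝ)/(x:ℝ)^2 ≤ 2 := by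
      have := sum_inv_sq N.toNat
      rw [hNN] at this
      have h5 : (1:ℝ)/(N.toNat:ℝ) ≥ 0 := by positivity
      linarith
    have h6 : ((Finset.Icc (1:ℤ) N).card : ℝ) ≤ (N:ℝ) := by
      rw [Int.card_Icc]
      have : ((N + 1 - 1).toNat : ℤ) = N := by omega
      have h7 : ((N + 1 - 1).toNat : ℝ) = (N:ℝ) := by exact_mod_cast this
      rw [h7]
    have hM' : (0:ℝ) ≤ (M:ℝ) := by exact_mod_cast hM
    calc ∑ x ∈ Finset.Icc (1:ℤ) N, (4*(M:ℝ)/(x:ℝ)^2 + 2) = _ := h3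
      _ ≤ 4*(M:ℝ) * 2 + 2 * (N:ℝ) := by
          apply add_le_add
          · apply mul_le_mul_of_nonneg_left h4 (by positivity)
          · linarith
      _ = 8*(M:ℝ) + 2*(N:ℝ) := by ring
  have hpos : ∑ x ∈ Finset.Icc (1:ℤ) N, F x ≤ 8*(M:ℝ) + 2*(N:ℝ) := by
    have h2 : ∑ x ∈ Finset.Icc (1:ℤ) N, F x ≤ ∑ x ∈ Finset.Icc (1:ℤ) N, (4*(M:ℝ)/(x:ℝ)^2 + 2) := by
      apply Finset.sum_le_sum
      intro x hx
      rw [Finset.mem_Icc] at hx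
      exact slice_count n hn ho a b t M N x hb hM (by rw [abs_of_nonneg (by omega)]; omega)
    exact h2.trans hcommon
  have hneg : ∑ x ∈ Finset.Icc (-N) (-1), F x ≤ 8*(M:ℝ) + 2*(N:ℝ) := by
    have h2 : ∑ x ∈ Finset.Icc (-N) (-1), F x ≤ ∑ x ∈ Finset.Icc (-N) (-1), (4*(M:ℝ)/(x:ℝ)^2 + 2) := by
      apply Finset.sum_le_sum
      intro x hx
      rw [Finset.mem_Icc] at hx
      exact slice_count n hn ho a b t M N x hb hM (by rw [abs_of_nonpos (by omega)]; omega)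
    have h3 : ∑ x ∈ Finset.Icc (-N) (-1), (4*(M:ℝ)/(x:ℝ)^2 + 2)
        = ∑ x ∈ Finset.Icc (1:ℤ) N, (4*(M:ℝ)/(x:ℝ)^2 + 2) := by
      apply Finset.sum_nbij' (fun x => -x) (fun x => -x)
      · intro x hx; rw [Finset.mem_Icc] at hx ⊢; omega
      · intro x hx; rw [Finset.mem_Icc] at hx ⊢; omega
      · intro x _; ring
      · intro x _; ring
      · intro x _
        have : ((-x : ℤ) : ℝ) = -(x:ℝ) := by push_cast; ring
        rw [this]
        ring
    have h4 : ∑ x ∈ Finset.Icc (1:ℤ) N, F x ≤ 8*(M:ℝ) + 2*(N:ℝ) := hpos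
    -- reuse the bound on the common sum
    have h5 : ∑ x ∈ Finset.Icc (1:ℤ) N, (4*(M:ℝ)/(x:ℝ)^2 + 2) ≤ 8*(M:ℝ) + 2*(N:ℝ) := hcommon
    calc ∑ x ∈ Finset.Icc (-N) (-1), F x ≤ _ := h2
      _ = _ := h3
      _ ≤ 8*(M:ℝ) + 2*(N:ℝ) := h5
  calc (H.card : ℝ) ≤ _ := hbig
    _ ≤ (8*(M:ℝ) + 2*(N:ℝ)) + ((2*(N:ℝ) + 1) + (8*(M:ℝ) + 2*(N:ℝ))) := by
        apply add_le_add hneg (add_le_add hzero hpos)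
    _ = 6*(N:ℝ) + 16*(M:ℝ) + 1 := by ring

lemma pair_count (n : ℕ) (hn : 3 ≤ n) (ho : Odd n) (a b t M N : ℤ)
    (ha : 1 ≤ |a|) (hb : 1 ≤ |b|) (hM : 1 ≤ M) (hN : 1 ≤ N) :
    ((((Finset.Icc (-N) N ×ˢ Finset.Icc (-N) N).filter
       (fun p : ℤ×ℤ => |a*p.1^n + b*p.2^n + t| ≤ M)).card : ℝ)
     ≤ 34*((M:ℝ) + (N:ℝ))) := by
  set B := Finset.Icc (-N) N ×ˢ Finset.Icc (-N) N with hB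
  set P := B.filter (fun p : ℤ×ℤ => |a*p.1^n + b*p.2^n + t| ≤ M) with hP
  have hsplitc := Finset.card_filter_add_card_filter_not
    (s := P) (p := fun p : ℤ×ℤ => |p.1| ≤ |p.2|)
  have h1 : P.filter (fun p : ℤ×ℤ => |p.1| ≤ |p.2|)
      = B.filter (fun p : ℤ×ℤ => |a*p.1^n + b*p.2^n + t| ≤ M ∧ |p.1| ≤ |p.2|) := by
    rw [hP, Finset.filter_filter]
  have hc1 : ((P.filter (fun p : ℤ×ℤ => |p.1| ≤ |p.2|)).card : ℝ) ≤ 6*(N:ℝ) + 16*(M:ℝ) + 1 := by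
    rw [h1]
    exact half_pair n hn ho a b t M N hb (by omega) hN
  have hc2 : ((P.filter (fun p : ℤ×ℤ => ¬(|p.1| ≤ |p.2|))).card : ℝ) ≤ 6*(N:ℝ) + 16*(M:ℝ) + 1 := by
    have hinj : (P.filter (fun p : ℤ×ℤ => ¬(|p.1| ≤ |p.2|))).card
        ≤ ((Finset.Icc (-N) N ×ˢ Finset.Icc (-N) N).filter
           (fun p : ℤ×ℤ => |b*p.1^n + a*p.2^n + t| ≤ M ∧ |p.1| ≤ |p.2|)).card := by
      apply Finset.card_le_card_of_injOn (fun p => (p.2, p.1))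
      · intro p hp
        rw [Finset.mem_coe, Finset.mem_filter, hP, Finset.mem_filter, hB, Finset.mem_product] at hp
        obtain ⟨⟨⟨hm1, hm2⟩, hcond⟩, hlt⟩ := hp
        rw [Finset.mem_coe, Finset.mem_filter, Finset.mem_product]
        refine ⟨⟨hm2, hm1⟩, ?_, by show |p.2| ≤ |p.1|; omega⟩
        show |b*p.2^n + a*p.1^n + t| ≤ M
        rw [show b*p.2^n + a*p.1^n + t = a*p.1^n + b*p.2^n + t from by ring]
        exact hcond
      · intro p _ q _ hpq
        simp only [Prod.mk.injEq] at hpq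
        exact Prod.ext hpq.2 hpq.1
    have := half_pair n hn ho b a t M N ha (by omega) hN
    calc ((P.filter (fun p : ℤ×ℤ => ¬(|p.1| ≤ |p.2|))).card : ℝ) ≤ _ := by exact_mod_cast hinj
      _ ≤ 6*(N:ℝ) + 16*(M:ℝ) + 1 := this
  have hMr : (1:ℝ) ≤ (M:ℝ) := by exact_mod_cast hM
  have hNr : (1:ℝ) ≤ (N:ℝ) := by exact_mod_cast hN
  have : (P.card : ℝ) = ((P.filter (fun p : ℤ×ℤ => |p.1| ≤ |p.2|)).card : ℝ)
      + ((P.filter (fun p : ℤ×ℤ => ¬(|p.1| ≤ |p.2|))).card : ℝ) := by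
    exact_mod_cast hsplitc.symm
  rw [this]
  linarith

theorem stmt_2 (n k : ℕ) (hn : 3 ≤ n) (hnodd : Odd n) (hk : 3 ≤ k)
    (a : Fin (k + 1) → ℤ) (ha : ∀ i, a i ≠ 0) :
    ∀ ε : ℝ, 0 < ε → ∃ C : ℝ, 0 < C ∧ ∀ N : ℕ, 1 ≤ N →
      (Set.ncard {x : Fin (k + 1) → ℤ |
          (∀ i, |x i| ≤ (N : ℤ)) ∧
          (∑ i : Fin k, a i.castSucc * x i.castSucc ^ n) +
            2 * a (Fin.last k) * x (Fin.last k) = 0} : ℝ)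
        ≤ C * (N : ℝ) ^ (((k : ℝ) + 1) - 2 + ε) := by
  intro ε hε
  set A : ℤ := |a (Fin.last k)| with hA
  have hA1 : 1 ≤ A := Int.one_le_abs (by exact ha _)
  have hA1R : (1:ℝ) ≤ (A:ℝ) := by exact_mod_cast hA1
  refine ⟨34 * (2*(A:ℝ)+1) * 3^(k-2) + 1, by positivity, ?_⟩
  intro N hN
  set Nz : ℤ := (N:ℤ) with hNz
  have hNz1 : 1 ≤ Nz := by rw [hNz]; exact_mod_cast hN
  set M : ℤ := 2*A*Nz with hM
  have hM1 : 1 ≤ M := by nlinarith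
  -- the main counting estimate
  set i0 : Fin k := ⟨0, by omega⟩ with hi0
  set i1 : Fin k := ⟨1, by omega⟩ with hi1
  have h01 : i0 ≠ i1 := by
    rw [hi0, hi1]
    intro h
    have := congrArg Fin.val h
    simp at this
  set box1 : Finset (Fin (k+1) → ℤ) :=
    Fintype.piFinset (fun _ => Finset.Icc (-Nz) Nz) with hbox1
  set box0 : Finset (Fin k → ℤ) :=
    Fintype.piFinset (fun _ => Finset.Icc (-Nz) Nz) with hbox0
  set S : Finset (Fin (k+1) → ℤ) := box1.filter
    (fun x => (∑ i : Fin k, a i.castSucc * x i.castSucc ^ n)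
      + 2 * a (Fin.last k) * x (Fin.last k) = 0) with hS
  -- Step A : identify the set with ↑S
  have hsetS : {x : Fin (k + 1) → ℤ |
          (∀ i, |x i| ≤ (N : ℤ)) ∧
          (∑ i : Fin k, a i.castSucc * x i.castSucc ^ n) +
            2 * a (Fin.last k) * x (Fin.last k) = 0} = ↑S := by
    ext x
    simp only [Set.mem_setOf_eq, hS, Finset.coe_filter, hbox1, Fintype.mem_piFinset,
      Finset.mem_Icc]
    constructor
    · rintro ⟨h1, h2⟩
      exact ⟨fun i => abs_le.mp (h1 i), h2⟩
    · rintro ⟨h1, h2⟩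
      exact ⟨fun i => abs_le.mpr (h1 i), h2⟩
  rw [hsetS, Set.ncard_coe_finset]
  -- Step B : drop the last coordinate
  set Q : Finset (Fin k → ℤ) := box0.filter
    (fun y => |∑ i : Fin k, a i.castSucc * y i ^ n| ≤ M) with hQ
  have hSQ : S.card ≤ Q.card := by
    apply Finset.card_le_card_of_injOn (fun x => fun i : Fin k => x i.castSucc)
    · intro x hx
      rw [Finset.mem_coe, hS, Finset.mem_filter] at hx
      obtain ⟨hx1, hx2⟩ := hx
      rw [hbox1, Fintype.mem_piFinset] at hx1
      rw [Finset.mem_coe, hQ, Finset.mem_filter, hbox0, Fintype.mem_piFinset]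
      refine ⟨fun i => hx1 _, ?_⟩
      have heq : ∑ i : Fin k, a i.castSucc * x i.castSucc ^ n
          = -(2 * a (Fin.last k) * x (Fin.last k)) := by linarith
      rw [heq, abs_neg]
      have hlast : |x (Fin.last k)| ≤ Nz := by
        have := hx1 (Fin.last k)
        rw [Finset.mem_Icc] at this
        rw [abs_le]; exact this
      calc |2 * a (Fin.last k) * x (Fin.last k)|
          = 2 * A * |x (Fin.last k)| := by
            rw [abs_mul, abs_mul]
            norm_num
            exact Or.inl hA.symm
        _ ≤ 2 * A * Nz := by
            apply mul_le_mul_of_nonneg_left hlast (by positivity)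
        _ = M := hM.symm
    · intro x hx y hy hxy
      simp only [hS, Finset.coe_filter, Set.mem_setOf_eq] at hx hy
      funext i
      refine Fin.lastCases ?_ ?_ i
      · -- last coordinate
        have hsx : ∑ i : Fin k, a i.castSucc * x i.castSucc ^ n
            = ∑ i : Fin k, a i.castSucc * y i.castSucc ^ n := by
          apply Finset.sum_congr rfl
          intro i _
          have : x i.castSucc = y i.castSucc := congrFun hxy i
          rw [this]
        have h2 : 2 * a (Fin.last k) * x (Fin.last k) = 2 * a (Fin.last k) * y (Fin.last k) := by
          have ex := hx.2
          have ey := hy.2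
          rw [hsx] at ex
          linarith
        have hcoe : (2 : ℤ) * a (Fin.last k) ≠ 0 := by
          have := ha (Fin.last k); intro hcon
          rcases mul_eq_zero.mp hcon with h | h
          · norm_num at h
          · exact this h
        rw [mul_assoc, mul_assoc] at h2
        have := mul_left_cancel₀ (by norm_num : (2:ℤ) ≠ 0) h2
        exact mul_left_cancel₀ (ha (Fin.last k)) this
      · intro i
        exact congrFun hxy i
  -- Step C : fiberwise count over the coordinates other than i0, i1
  classical
  set p : Fin k → Prop := fun i => i = i0 ∨ i = i1 with hp
  set g : (Fin k → ℤ) → (Fin k → ℤ) := fun y i => if p i then 0 else y i with hg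
  set T : Finset (Fin k → ℤ) := box0.filter (fun z => z i0 = 0 ∧ z i1 = 0) with hT
  have hmapsto : ∀ y ∈ Q, g y ∈ T := by
    intro y hy
    rw [hQ, Finset.mem_filter] at hy
    rw [hT, Finset.mem_filter]
    refine ⟨?_, ?_, ?_⟩
    · rw [hbox0, Fintype.mem_piFinset]
      intro i
      show (if p i then 0 else y i) ∈ Finset.Icc (-Nz) Nz
      by_cases hpi : p i
      · rw [if_pos hpi, Finset.mem_Icc]; omega
      · rw [if_neg hpi]
        have := Fintype.mem_piFinset.mp (by rw [hbox0] at hy; exact hy.1) i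
        exact this
    · show (if p i0 then 0 else y i0) = 0
      rw [if_pos (Or.inl rfl)]
    · show (if p i1 then 0 else y i1) = 0
      rw [if_pos (Or.inr rfl)]
  have hQT : Q.card = ∑ z ∈ T, (Q.filter (fun y => g y = z)).card :=
    Finset.card_eq_sum_card_fiberwise hmapsto
  have hfiber : ∀ z ∈ T, ((Q.filter (fun y => g y = z)).card : ℝ) ≤ 34*((M:ℝ) + (Nz:ℝ)) := by
    intro z hz
    rw [hT, Finset.mem_filter] at hz
    obtain ⟨hzbox, hz0, hz1⟩ := hz
    set t : ℤ := ∑ i ∈ Finset.univ.filter (fun i => ¬ p i), a i.castSucc * z i ^ n with ht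
    have hinj : (Q.filter (fun y => g y = z)).card
        ≤ ((Finset.Icc (-Nz) Nz ×ˢ Finset.Icc (-Nz) Nz).filter
            (fun q : ℤ×ℤ => |a i0.castSucc * q.1^n + a i1.castSucc * q.2^n + t| ≤ M)).card := by
      apply Finset.card_le_card_of_injOn (fun y => (y i0, y i1))
      · intro y hy
        rw [Finset.mem_coe, Finset.mem_filter] at hy
        obtain ⟨hyQ, hyg⟩ := hy
        rw [hQ, Finset.mem_filter] at hyQ
        obtain ⟨hybox, hycond⟩ := hyQ
        rw [hbox0, Fintype.mem_piFinset] at hybox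
        rw [Finset.mem_coe, Finset.mem_filter, Finset.mem_product]
        refine ⟨⟨hybox i0, hybox i1⟩, ?_⟩
        have hsum : ∑ i : Fin k, a i.castSucc * y i ^ n
            = a i0.castSucc * (y i0)^n + a i1.castSucc * (y i1)^n + t := by
          rw [← Finset.sum_filter_add_sum_filter_not Finset.univ p
            (fun i => a i.castSucc * y i ^ n)]
          congr 1
          · have hfp : Finset.univ.filter p = {i0, i1} := by
              ext i
              simp [hp]
            rw [hfp, Finset.sum_insert (by simp [h01]), Finset.sum_singleton]
          · rw [ht]
            apply Finset.sum_congr rfl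
            intro i hi
            rw [Finset.mem_filter] at hi
            have hgyi : y i = z i := by
              have hco := congrFun hyg i
              have : g y i = y i := by
                show (if p i then 0 else y i) = y i
                rw [if_neg hi.2]
              rw [this] at hco
              exact hco
            rw [hgyi]
        show |a i0.castSucc * (y i0)^n + a i1.castSucc * (y i1)^n + t| ≤ M
        rw [← hsum]
        exact hycond
      · intro y hy y' hy' hpair
        simp only [Finset.coe_filter, Set.mem_setOf_eq] at hy hy'
        have h1 := hy.2
        have h2 := hy'.2
        simp only [Prod.mk.injEq] at hpair
        funext i
        by_cases hpi : p i
        · rcases hpi with h | h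
          · rw [h]; exact hpair.1
          · rw [h]; exact hpair.2
        · have e1 : y i = z i := by
            have hco := congrFun h1 i
            have : g y i = y i := by
              show (if p i then 0 else y i) = y i
              rw [if_neg hpi]
            rw [this] at hco
            exact hco
          have e2 : y' i = z i := by
            have hco := congrFun h2 i
            have : g y' i = y' i := by
              show (if p i then 0 else y' i) = y' i
              rw [if_neg hpi]
            rw [this] at hco
            exact hco
          rw [e1]
          exact e2.symm
    have hpc := pair_count n hn hnodd (a i0.castSucc) (a i1.castSucc) t M Nz
      (Int.one_le_abs (ha _)) (Int.one_le_abs (ha _)) hM1 hNz1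
    calc ((Q.filter (fun y => g y = z)).card : ℝ) ≤ _ := by exact_mod_cast hinj
      _ ≤ 34*((M:ℝ) + (Nz:ℝ)) := hpc
  have hQbound : (Q.card : ℝ) ≤ (T.card : ℝ) * (34*((M:ℝ) + (Nz:ℝ))) := by
    rw [hQT]
    push_cast
    calc ∑ z ∈ T, ((Q.filter (fun y => g y = z)).card : ℝ)
        ≤ ∑ _z ∈ T, 34*((M:ℝ)+(Nz:ℝ)) := Finset.sum_le_sum hfiber
      _ = T.card * (34*((M:ℝ)+(Nz:ℝ))) := by
          rw [Finset.sum_const, nsmul_eq_mul]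
  -- bound on the number of fibers
  have hTcard : T.card ≤ (2*N+1)^(k-2) := by
    have hsub : T ⊆ Fintype.piFinset
        (fun i => if p i then ({0} : Finset ℤ) else Finset.Icc (-Nz) Nz) := by
      intro z hz
      rw [hT, Finset.mem_filter] at hz
      obtain ⟨hzbox, hz0, hz1⟩ := hz
      rw [hbox0, Fintype.mem_piFinset] at hzbox
      rw [Fintype.mem_piFinset]
      intro i
      by_cases hpi : p i
      · rw [if_pos hpi]
        rcases hpi with h | h <;> rw [h] <;> simp [hz0, hz1]
      · rw [if_neg hpi]
        exact hzbox i
    have hc := Finset.card_le_card hsub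
    rw [Fintype.card_piFinset] at hc
    have hic : (Finset.Icc (-Nz) Nz).card = 2*N+1 := by
      rw [Int.card_Icc, hNz]
      omega
    have hcards : ∀ i : Fin k, (if p i then ({0} : Finset ℤ) else Finset.Icc (-Nz) Nz).card
        = if p i then 1 else 2*N+1 := by
      intro i
      split
      · simp
      · exact hic
    rw [Finset.prod_congr rfl (fun i _ => hcards i)] at hc
    rw [Finset.prod_ite (f := fun _ => 1) (g := fun _ => 2*N+1)] at hc
    rw [Finset.prod_const, Finset.prod_const, one_pow, one_mul] at hc
    have hfp : Finset.univ.filter p = {i0, i1} := by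
      ext i
      simp [hp]
    have hcp : (Finset.univ.filter p).card = 2 := by
      rw [hfp, Finset.card_insert_of_notMem (by simp [h01]), Finset.card_singleton]
    have hsum2 := Finset.card_filter_add_card_filter_not
      (s := (Finset.univ : Finset (Fin k))) (p := p)
    rw [Finset.card_univ, Fintype.card_fin, hcp] at hsum2
    have hcnp : (Finset.univ.filter (fun i => ¬ p i)).card = k - 2 := by omega
    rw [hcnp] at hc
    exact hc
  -- put everything together
  have hNr : (1:ℝ) ≤ (N:ℝ) := by exact_mod_cast hN
  have hMNz : (M:ℝ) + (Nz:ℝ) = (2*(A:ℝ)+1) * (N:ℝ) := by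
    rw [hM, hNz]
    push_cast
    ring
  have hTr : (T.card : ℝ) ≤ (2*(N:ℝ)+1)^(k-2) := by
    calc (T.card : ℝ) ≤ (((2*N+1)^(k-2) : ℕ) : ℝ) := by exact_mod_cast hTcard
      _ = (2*(N:ℝ)+1)^(k-2) := by push_cast; ring
  have h3N : (2*(N:ℝ)+1)^(k-2) ≤ (3:ℝ)^(k-2) * (N:ℝ)^(k-2) := by
    rw [← mul_pow]
    apply pow_le_pow_left₀ (by positivity)
    linarith
  have hSR : (S.card : ℝ) ≤ (Q.card : ℝ) := by exact_mod_cast hSQ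
  have hchain : (S.card : ℝ) ≤ 34 * (2*(A:ℝ)+1) * 3^(k-2) * (N:ℝ)^(k-1) := by
    have hpow : (N:ℝ)^(k-2) * (N:ℝ) = (N:ℝ)^(k-1) := by
      rw [← pow_succ]
      congr 1
      omega
    calc (S.card : ℝ) ≤ (Q.card : ℝ) := hSR
      _ ≤ (T.card : ℝ) * (34*((M:ℝ) + (Nz:ℝ))) := hQbound
      _ ≤ (3:ℝ)^(k-2) * (N:ℝ)^(k-2) * (34*((2*(A:ℝ)+1) * (N:ℝ))) := by
          rw [hMNz]
          apply mul_le_mul (hTr.trans h3N) le_rfl (by positivity) (by positivity)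
      _ = 34 * (2*(A:ℝ)+1) * 3^(k-2) * ((N:ℝ)^(k-2) * (N:ℝ)) := by ring
      _ = 34 * (2*(A:ℝ)+1) * 3^(k-2) * (N:ℝ)^(k-1) := by rw [hpow]
  have hrpow : (N:ℝ)^(k-1) ≤ (N:ℝ) ^ (((k:ℝ) + 1) - 2 + ε) := by
    have h1 : (N:ℝ)^(k-1) = (N:ℝ) ^ (((k-1 : ℕ)):ℝ) := (Real.rpow_natCast _ _).symm
    rw [h1]
    apply Real.rpow_le_rpow_of_exponent_le hNr
    have : (((k-1:ℕ)):ℝ) = (k:ℝ) - 1 := by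
      have : ((k:ℕ) : ℝ) - 1 = ((k - 1 : ℕ) : ℝ) := by
        rw [Nat.cast_sub (by omega)]
        simp
      linarith [this]
    rw [this]
    linarith
  calc (S.card : ℝ) ≤ 34 * (2*(A:ℝ)+1) * 3^(k-2) * (N:ℝ)^(k-1) := hchain
    _ ≤ (34 * (2*(A:ℝ)+1) * 3^(k-2) + 1) * (N:ℝ) ^ (((k:ℝ) + 1) - 2 + ε) := by
        have hpos : (0:ℝ) < (N:ℝ) ^ (((k:ℝ) + 1) - 2 + ε) := by
          apply Real.rpow_pos_of_pos
          linarith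
        have h2 : 34 * (2*(A:ℝ)+1) * 3^(k-2) * (N:ℝ)^(k-1)
            ≤ 34 * (2*(A:ℝ)+1) * 3^(k-2) * (N:ℝ) ^ (((k:ℝ) + 1) - 2 + ε) := by
          apply mul_le_mul_of_nonneg_left hrpow (by positivity)
        nlinarith [hpos]
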